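/- The ABC vector field with coefficients satisfying 1 = A ≥ B ≥ C ≥ 0 is nonsingular (has no zeros) if and only if B² + C² < 1. -/
import Mathlib


/-- the ABC field with 1 = A ≥ B ≥ C ≥ 0 is nonsingular
iff B² + C² < 1. -/
theorem abc_nonsingular_iff (A B C : ℝ) (hA : A = 1) (hBA : B ≤ A) (hCB : C ≤ B)
    (hC : 0 ≤ C) :
    (∀ x y z : ℝ,
        ¬(A * Real.sin z + C * Real.cos y = 0 ∧
          B * Real.sin x + A * Real.cos z = 0 ∧
          C * Real.sin y + B * Real.cos x = 0)) ↔ B ^ 2 + C ^ 2 < 1 := by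
  subst hA
  have hC1 : C ≤ 1 := hCB.trans hBA
  constructor
  · intro h
    by_contra hge
    push_neg at hge
    rcases eq_or_lt_of_le hC with rfl | hCpos
    · -- C = 0, so B = 1
      have hB1 : B = 1 := le_antisymm hBA (by nlinarith)
      exact h (Real.pi/2) 0 Real.pi
        ⟨by simp, by simp [hB1], by simp⟩
    · have hB : 0 < B := lt_of_lt_of_le hCpos hCB
      set k := Real.sqrt ((B^2+C^2-1)/(2*B^2*C^2)) with hkdef
      have hknn : 0 ≤ k := Real.sqrt_nonneg _
      have hk2 : k^2 = (B^2+C^2-1)/(2*B^2*C^2) :=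
        Real.sq_sqrt (div_nonneg (by linarith) (by positivity))
      have hk2' : 2*B^2*C^2*k^2 = B^2+C^2-1 := by
        rw [hk2]; field_simp
      -- bounds
      have hCk2 : (C*k)^2 ≤ 1 := by nlinarith [mul_pos hB hB]
      have hBk2 : (B*k)^2 ≤ 1 := by nlinarith [mul_pos hCpos hCpos]
      have hCk : C*k ≤ 1 := by nlinarith [mul_nonneg hC hknn]
      have hBk : B*k ≤ 1 := by nlinarith [mul_nonneg hB.le hknn]
      have hCknn : 0 ≤ C*k := mul_nonneg hC hknn
      have hBknn : 0 ≤ B*k := mul_nonneg hB.le hknn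
      set x := Real.arccos (-(C*k)) with hxdef
      set y := Real.arcsin (B*k) with hydef
      have hcx : Real.cos x = -(C*k) := Real.cos_arccos (by linarith) (by linarith)
      have hsx : Real.sin x = Real.sqrt (1 - (C*k)^2) := by
        rw [hxdef, Real.sin_arccos, neg_sq]
      have hsxnn : 0 ≤ Real.sin x := by rw [hsx]; exact Real.sqrt_nonneg _
      have hsx1 : Real.sin x ≤ 1 := Real.sin_le_one x
      have hsy : Real.sin y = B*k := Real.sin_arcsin (by linarith) hBk
      have hcy : Real.cos y = Real.sqrt (1 - (B*k)^2) := by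
        rw [hydef, Real.cos_arcsin]
      set z := -Real.arccos (-(B * Real.sin x)) with hzdef
      have hBsx : B * Real.sin x ≤ 1 := by nlinarith
      have hBsxnn : 0 ≤ B * Real.sin x := mul_nonneg hB.le hsxnn
      have hcz : Real.cos z = -(B * Real.sin x) := by
        rw [hzdef, Real.cos_neg]
        exact Real.cos_arccos (by linarith) (by linarith)
      have hsz : Real.sin z = -Real.sqrt (1 - (B * Real.sin x)^2) := by
        rw [hzdef, Real.sin_neg, Real.sin_arccos, neg_sq]
      have hsx2 : Real.sin x ^ 2 = 1 - (C*k)^2 := by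
        rw [hsx, Real.sq_sqrt (by linarith)]
      have key : 1 - (B * Real.sin x)^2 = C^2 * (1 - (B*k)^2) := by
        linear_combination (-(B^2)) * hsx2 + hk2'
      have e1sqrt : Real.sqrt (1 - (B * Real.sin x)^2)
          = C * Real.sqrt (1 - (B*k)^2) := by
        rw [key, Real.sqrt_mul (sq_nonneg C), Real.sqrt_sq hC]
      refine h x y z ⟨?_, ?_, ?_⟩
      · rw [hsz, hcy, e1sqrt]; ring
      · rw [hcz]; ring
      · rw [hsy, hcx]; ring
  · rintro hlt x y z ⟨e1, e2, e3⟩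
    have h1 : Real.sin z = -(C * Real.cos y) := by linarith
    have h2 : Real.cos z = -(B * Real.sin x) := by linarith
    have hpz := Real.sin_sq_add_cos_sq z
    rw [h1, h2, neg_sq, neg_sq] at hpz
    nlinarith [Real.sin_sq_add_cos_sq x, Real.sin_sq_add_cos_sq y,
      sq_nonneg (B * Real.cos x), sq_nonneg (C * Real.sin y),
      sq_nonneg B, sq_nonneg C]
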